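/- Corollary 1 (linear-in-means type networks). Assume J.mulVec 1 = 1 and G.mulVec 1 = 1 (all row sums of J and of G equal one), that Dᵀ*D is invertible, and that the rank of the concatenated n×(2N+M) matrix [J, G, D] equals 2N + M − 1. Let ρ, ρ̄ ∈ ℝ, μα, μ̄α ∈ ℝ^N and μγ, μ̄γ ∈ ℝ^M satisfy (J + ρ·G).mulVec μα + D.mulVec μγ = (J + ρ̄·G).mulVec μ̄α + D.mulVec μ̄γ. If there exist indices i, j with μα i ≠ μα j, then ρ̄ = ρ. -/

import Mathlib

open Matrix

/-- Corollary 1 (linear-in-means type networks): if the rows of J and G sum to one and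
the stacked matrix [J, G, D] has rank 2N + M − 1, then ρ is identified provided the mean
individual heterogeneity μα is not constant across individuals. -/
theorem corollary1_linear_in_means
    (n N M : ℕ) (hn : 0 < n) (hN : 0 < N) (hM : 0 < M)
    (J G : Matrix (Fin n) (Fin N) ℝ) (D : Matrix (Fin n) (Fin M) ℝ)
    (hJ1 : J.mulVec 1 = 1) (hG1 : G.mulVec 1 = 1)
    (hDD : IsUnit (Dᵀ * D))
    (hrank : (Matrix.fromCols J (Matrix.fromCols G D)).rank = 2 * N + M - 1)
    (ρ ρ' : ℝ) (μα μα' : Fin N → ℝ) (μγ μγ' : Fin M → ℝ)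
    (hmom : (J + ρ • G).mulVec μα + D.mulVec μγ
          = (J + ρ' • G).mulVec μα' + D.mulVec μγ')
    (hhet : ∃ i j : Fin N, μα i ≠ μα j) :
    ρ' = ρ := by
  classical
  obtain ⟨i, j, hij⟩ := hhet
  set A := Matrix.fromCols J (Matrix.fromCols G D) with hA
  have hdim : Module.finrank ℝ (LinearMap.ker A.mulVecLin) = 1 := by
    have h := LinearMap.finrank_range_add_finrank_ker A.mulVecLin
    rw [show Module.finrank ℝ ((Fin N ⊕ (Fin N ⊕ Fin M)) → ℝ) = N + (N + M) by
      simp [Module.finrank_fintype_fun_eq_card]] at h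
    have hr : Module.finrank ℝ (LinearMap.range A.mulVecLin) = 2 * N + M - 1 := hrank
    omega
  set v0 : (Fin N ⊕ (Fin N ⊕ Fin M)) → ℝ := Sum.elim 1 (Sum.elim (-1) 0) with hv0
  have hv0mem : v0 ∈ LinearMap.ker A.mulVecLin := by
    simp [LinearMap.mem_ker, Matrix.mulVecLin_apply, hA, hv0,
      Matrix.fromCols_mulVec_sumElim, hJ1, hG1, Matrix.mulVec_neg, Matrix.mulVec_zero]
  have hv0ne : v0 ≠ 0 := by
    intro h
    have := congrFun h (Sum.inl i)
    simp [hv0] at this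
  have hspan : Submodule.span ℝ {v0} = LinearMap.ker A.mulVecLin := by
    apply Submodule.eq_of_le_of_finrank_eq
    · rwa [Submodule.span_le, Set.singleton_subset_iff]
    · rw [hdim, finrank_span_singleton hv0ne]
  set w : (Fin N ⊕ (Fin N ⊕ Fin M)) → ℝ :=
    Sum.elim (μα - μα') (Sum.elim (ρ • μα - ρ' • μα') (μγ - μγ')) with hw
  have hwmem : w ∈ LinearMap.ker A.mulVecLin := by
    simp only [LinearMap.mem_ker, Matrix.mulVecLin_apply, hA, hw,
      Matrix.fromCols_mulVec_sumElim, Matrix.mulVec_sub, Matrix.mulVec_smul]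
    funext x
    have h := congrFun hmom x
    simp only [Matrix.add_mulVec, Matrix.smul_mulVec, Pi.add_apply, Pi.sub_apply,
      Pi.smul_apply, Pi.zero_apply, smul_eq_mul] at h ⊢
    linarith
  have hwsp : w ∈ Submodule.span ℝ {v0} := hspan ▸ hwmem
  obtain ⟨c, hc⟩ := Submodule.mem_span_singleton.mp hwsp
  have h1 : μα' i = μα i - c := by
    have := congrFun hc (Sum.inl i)
    simp [hv0, hw] at this
    linarith
  have h1' : μα' j = μα j - c := by
    have := congrFun hc (Sum.inl j)
    simp [hv0, hw] at this
    linarith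
  have h2 : ρ * μα i - ρ' * μα' i = -c := by
    have := congrFun hc (Sum.inr (Sum.inl i))
    simp [hv0, hw] at this
    linarith
  have h2' : ρ * μα j - ρ' * μα' j = -c := by
    have := congrFun hc (Sum.inr (Sum.inl j))
    simp [hv0, hw] at this
    linarith
  by_contra hne
  have hρ : ρ - ρ' ≠ 0 := fun h => hne (by linarith [sub_eq_zero.mp h])
  have ki : (ρ - ρ') * μα i = -c - ρ' * c := by rw [h1] at h2; ring_nf; ring_nf at h2; linarith
  have kj : (ρ - ρ') * μα j = -c - ρ' * c := by rw [h1'] at h2'; ring_nf; ring_nf at h2'; linarith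
  exact hij (mul_left_cancel₀ hρ (by linarith))
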